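/- Let (X, d_X) and (Y, d_Y) be metric spaces, let x_1, …, x_n ∈ X be pairwise distinct and y_1, …, y_m ∈ Y be pairwise distinct, and let Γ ∈ ℝ^{n×m} have nonnegative entries with Σ_{i,j} Γ_{ij} = 1. Then, as h → 0⁺, the kernelized mutual information Î_Γ(X,Y) computed with the Gaussian kernel K_h converges to −H(Γ) + log(nm). -/

import Mathlib

open Filter Real

/-- Gaussian kernel with bandwidth `h` and fixed `σ` (normalizing constant omitted,
since it cancels in all ratios considered): `K_h(t) = exp(−t²/(2h²σ²))`. -/
noncomputable def gaussK (σ h t : ℝ) : ℝ := Real.exp (-(t ^ 2) / (2 * h ^ 2 * σ ^ 2))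

/-- Entropy `H(Γ) = −Σ_{i,j} Γ_{ij} log Γ_{ij}` (the convention `0·log 0 = 0` holds
automatically in Lean). -/
noncomputable def matEntropy {n m : ℕ} (Γ : Matrix (Fin n) (Fin m) ℝ) : ℝ :=
  -(∑ i, ∑ j, Γ i j * Real.log (Γ i j))

lemma gaussK_tendsto (σ : ℝ) (hσ : 0 < σ) (t : ℝ) :
    Tendsto (fun h : ℝ => gaussK σ h t) (nhdsWithin 0 (Set.Ioi 0))
      (nhds (if t = 0 then 1 else 0)) := by
  by_cases ht : t = 0
  · simp only [ht, if_pos rfl]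
    have : (fun h : ℝ => gaussK σ h 0) = fun _ => 1 := by
      funext h; simp [gaussK]
    rw [this]; exact tendsto_const_nhds
  · simp only [ht, if_neg ht]
    have hc : 0 < t ^ 2 / (2 * σ ^ 2) := by positivity
    have h1 : Tendsto (fun h : ℝ => (h ^ 2)⁻¹) (nhdsWithin (0:ℝ) (Set.Ioi 0)) atTop := by
      apply Tendsto.comp tendsto_inv_nhdsGT_zero
      apply tendsto_nhdsWithin_of_tendsto_nhds_of_eventually_within
      · exact ((continuous_pow 2).tendsto (0:ℝ)).mono_left nhdsWithin_le_nhds |>.congr'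
          (by filter_upwards with a using rfl) |>.mono_right (by simp)
      · filter_upwards [self_mem_nhdsWithin] with a ha using pow_pos (Set.mem_Ioi.mp ha) 2
    have heq : ∀ h : ℝ, -(t ^ 2) / (2 * h ^ 2 * σ ^ 2)
        = -(t ^ 2 / (2 * σ ^ 2) * (h ^ 2)⁻¹) := by
      intro h
      simp only [div_eq_mul_inv, mul_inv]
      ring
    have h2 : Tendsto (fun h : ℝ => -(t ^ 2) / (2 * h ^ 2 * σ ^ 2))
        (nhdsWithin (0:ℝ) (Set.Ioi 0)) atBot :=
      (tendsto_neg_atTop_atBot.comp (h1.const_mul_atTop hc)).congr fun h => (heq h).symm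
    exact Real.tendsto_exp_atBot.comp h2


/-- As `h → 0⁺`, the kernelized mutual information `Î_Γ(X,Y)` computed
with the Gaussian kernel converges to `−H(Γ) + log(nm)`. -/
theorem infoot_mi_tendsto_neg_entropy
    {X Y : Type*} [MetricSpace X] [MetricSpace Y] {n m : ℕ}
    (x : Fin n → X) (y : Fin m → Y)
    (hx : Function.Injective x) (hy : Function.Injective y)
    (σ : ℝ) (hσ : 0 < σ)
    (Γ : Matrix (Fin n) (Fin m) ℝ)
    (hΓ : ∀ i j, 0 ≤ Γ i j)
    (hΓsum : ∑ i, ∑ j, Γ i j = 1) :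
    Tendsto (fun h : ℝ =>
        ∑ i, ∑ j,
          if Γ i j = 0 then 0
          else Γ i j * Real.log (
            ((n : ℝ) * m *
              ∑ k, ∑ l, Γ k l * gaussK σ h (dist (x i) (x k)) * gaussK σ h (dist (y j) (y l))) /
            ((∑ k, gaussK σ h (dist (x i) (x k))) * (∑ l, gaussK σ h (dist (y j) (y l))))))
      (nhdsWithin 0 (Set.Ioi 0))
      (nhds (-matEntropy Γ + Real.log ((n : ℝ) * m))) := by
  have hn : 0 < n := by
    rcases Nat.eq_zero_or_pos n with h | h
    · subst h; simp at hΓsum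
    · exact h
  have hm : 0 < m := by
    rcases Nat.eq_zero_or_pos m with h | h
    · subst h; simp at hΓsum
    · exact h
  have hnm : (0:ℝ) < (n:ℝ) * m := by
    have : (0:ℝ) < (n:ℝ) := by exact_mod_cast hn
    have : (0:ℝ) < (m:ℝ) := by exact_mod_cast hm
    positivity
  set L := nhdsWithin (0:ℝ) (Set.Ioi 0) with hL
  -- A i : sum over k tends to 1
  have hA : ∀ i : Fin n, Tendsto (fun h : ℝ => ∑ k, gaussK σ h (dist (x i) (x k))) L (nhds 1) := by
    intro i
    have hsum := tendsto_finset_sum (Finset.univ : Finset (Fin n))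
      (fun k _ => gaussK_tendsto σ hσ (dist (x i) (x k)))
    have hval : (∑ k, (if dist (x i) (x k) = 0 then (1:ℝ) else 0)) = 1 := by
      rw [Finset.sum_eq_single i]
      · simp
      · intro k _ hk
        rw [if_neg]
        simp only [dist_eq_zero]
        exact fun e => hk (hx e).symm
      · simp
    rw [← hval]; exact hsum
  have hA' : ∀ j : Fin m, Tendsto (fun h : ℝ => ∑ l, gaussK σ h (dist (y j) (y l))) L (nhds 1) := by
    intro j
    have hsum := tendsto_finset_sum (Finset.univ : Finset (Fin m))
      (fun l _ => gaussK_tendsto σ hσ (dist (y j) (y l)))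
    have hval : (∑ l, (if dist (y j) (y l) = 0 then (1:ℝ) else 0)) = 1 := by
      rw [Finset.sum_eq_single j]
      · simp
      · intro l _ hl
        rw [if_neg]
        simp only [dist_eq_zero]
        exact fun e => hl (hy e).symm
      · simp
    rw [← hval]; exact hsum
  have hB : ∀ (i : Fin n) (j : Fin m), Tendsto (fun h : ℝ =>
      ∑ k, ∑ l, Γ k l * gaussK σ h (dist (x i) (x k)) * gaussK σ h (dist (y j) (y l)))
      L (nhds (Γ i j)) := by
    intro i j
    have hsum := tendsto_finset_sum (Finset.univ : Finset (Fin n)) (fun k _ =>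
      tendsto_finset_sum (Finset.univ : Finset (Fin m)) (fun l _ =>
        (((gaussK_tendsto σ hσ (dist (x i) (x k))).const_mul (Γ k l)).mul
          (gaussK_tendsto σ hσ (dist (y j) (y l))))))
    have hval : (∑ k, ∑ l, Γ k l * (if dist (x i) (x k) = 0 then (1:ℝ) else 0)
        * (if dist (y j) (y l) = 0 then (1:ℝ) else 0)) = Γ i j := by
      rw [Finset.sum_eq_single i]
      · rw [Finset.sum_eq_single j]
        · simp
        · intro l _ hl
          have hd : dist (y j) (y l) ≠ 0 := by
            rw [ne_eq, dist_eq_zero]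
            exact fun e => hl (hy e).symm
          rw [if_neg hd, mul_zero]
        · simp
      · intro k _ hk
        apply Finset.sum_eq_zero
        intro l _
        have hd : dist (x i) (x k) ≠ 0 := by
          rw [ne_eq, dist_eq_zero]
          exact fun e => hk (hx e).symm
        rw [if_neg hd, mul_zero, zero_mul]
      · simp
    rw [← hval]; exact hsum
  have hterm : ∀ (i : Fin n) (j : Fin m), Tendsto (fun h : ℝ =>
      if Γ i j = 0 then (0:ℝ)
      else Γ i j * Real.log (
        ((n : ℝ) * m *
          ∑ k, ∑ l, Γ k l * gaussK σ h (dist (x i) (x k)) * gaussK σ h (dist (y j) (y l))) /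
        ((∑ k, gaussK σ h (dist (x i) (x k))) * (∑ l, gaussK σ h (dist (y j) (y l))))))
      L (nhds (if Γ i j = 0 then (0:ℝ) else Γ i j * Real.log ((n:ℝ) * m * Γ i j))) := by
    intro i j
    by_cases hij : Γ i j = 0
    · simp only [hij, if_pos rfl]
      exact tendsto_const_nhds
    · simp only [hij, if_neg hij]
      have hΓpos : 0 < Γ i j := lt_of_le_of_ne (hΓ i j) (Ne.symm hij)
      have hnum : Tendsto (fun h : ℝ => (n:ℝ) * m *
          ∑ k, ∑ l, Γ k l * gaussK σ h (dist (x i) (x k)) * gaussK σ h (dist (y j) (y l)))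
          L (nhds ((n:ℝ) * m * Γ i j)) := (hB i j).const_mul ((n:ℝ) * m)
      have hden : Tendsto (fun h : ℝ =>
          (∑ k, gaussK σ h (dist (x i) (x k))) * (∑ l, gaussK σ h (dist (y j) (y l))))
          L (nhds (1 * 1)) := (hA i).mul (hA' j)
      have hdiv := hnum.div hden (by norm_num)
      have hlim : ((n:ℝ) * m * Γ i j) / (1 * 1) = (n:ℝ) * m * Γ i j := by norm_num
      rw [hlim] at hdiv
      have hne : (n:ℝ) * m * Γ i j ≠ 0 := by positivity
      exact (hdiv.log hne).const_mul (Γ i j)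
  have htotal := tendsto_finset_sum (Finset.univ : Finset (Fin n)) (fun i _ =>
    tendsto_finset_sum (Finset.univ : Finset (Fin m)) (fun j _ => hterm i j))
  have hfin : (∑ i, ∑ j, if Γ i j = 0 then (0:ℝ) else Γ i j * Real.log ((n:ℝ) * m * Γ i j))
      = -matEntropy Γ + Real.log ((n : ℝ) * m) := by
    have hsplit : ∀ (i : Fin n) (j : Fin m),
        (if Γ i j = 0 then (0:ℝ) else Γ i j * Real.log ((n:ℝ) * m * Γ i j))
        = Γ i j * Real.log (Γ i j) + Real.log ((n:ℝ) * m) * Γ i j := by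
      intro i j
      by_cases hij : Γ i j = 0
      · simp [hij]
      · rw [if_neg hij, Real.log_mul (ne_of_gt hnm) hij]
        ring
    simp only [hsplit]
    rw [show (∑ i, ∑ j, (Γ i j * Real.log (Γ i j) + Real.log ((n:ℝ) * m) * Γ i j))
        = (∑ i, ∑ j, Γ i j * Real.log (Γ i j)) + Real.log ((n:ℝ) * m) * ∑ i, ∑ j, Γ i j by
      simp [Finset.sum_add_distrib, Finset.mul_sum]]
    rw [hΓsum, mul_one, matEntropy, neg_neg]
  rw [← hfin]
  exact htotal
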